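/- For every $T>0$ there exists a constant $C>0$ such that for all $\lambda>0$, $s>0$ and $t\in(0,T]$: $\int_0^t \left(\lambda^s (t-\tau) \ln(\lambda)\, e^{-\lambda^s (t-\tau)}\right)^2 d\tau \le \frac{C}{s^2}$. (The integrand is the square of $\partial_s e^{-\lambda^s(t-\tau)}$.) -/

import Mathlib

private lemma aux1 (x : ℝ) : x * Real.exp (-x) ≤ 1 := by
  have h := Real.add_one_le_exp x
  have hp := Real.exp_pos x
  rw [Real.exp_neg, mul_inv_le_iff₀ hp, one_mul]
  linarith

private lemma aux2 (u : ℝ) (hu : 0 < u) : |Real.log u| * (u * Real.exp (-u)) ≤ 4 := by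
  rcases le_or_gt u 1 with h | h
  · have hlog : Real.log u ≤ 0 := Real.log_nonpos hu.le h
    rw [abs_of_nonpos hlog]
    have h1 : Real.log (1 / u) ≤ 1 / u - 1 := Real.log_le_sub_one_of_pos (by positivity)
    rw [Real.log_div one_ne_zero hu.ne', Real.log_one] at h1
    have h2 : (-Real.log u) * u ≤ 1 - u := by
      have h1' : -Real.log u ≤ 1 / u - 1 := by linarith
      have := mul_le_mul_of_nonneg_right h1' hu.le
      have heq : (1 / u - 1) * u = 1 - u := by field_simp
      linarith
    have h3 : Real.exp (-u) ≤ 1 := Real.exp_le_one_iff.mpr (by linarith)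
    have hex : 0 < Real.exp (-u) := Real.exp_pos _
    nlinarith [abs_nonneg (Real.log u), neg_nonneg.mpr hlog]
  · have hlog : 0 ≤ Real.log u := Real.log_nonneg h.le
    rw [abs_of_nonneg hlog]
    have h1 : Real.log u ≤ u - 1 := Real.log_le_sub_one_of_pos hu
    have h2 : (u / 2) * Real.exp (-(u / 2)) ≤ 1 := aux1 (u / 2)
    have h4 : u * Real.exp (-(u / 2)) ≤ 2 := by linarith
    have h3 : Real.exp (-u) = Real.exp (-(u / 2)) * Real.exp (-(u / 2)) := by
      rw [← Real.exp_add]; ring_nf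
    have hex : 0 < Real.exp (-(u / 2)) := Real.exp_pos _
    have h5 : u ^ 2 * Real.exp (-u) ≤ 4 := by
      have hp : 0 ≤ u * Real.exp (-(u / 2)) := by positivity
      have hm := mul_le_mul h4 h4 hp (by norm_num : (0:ℝ) ≤ 2)
      calc u ^ 2 * Real.exp (-u)
          = (u * Real.exp (-(u / 2))) * (u * Real.exp (-(u / 2))) := by rw [h3]; ring
        _ ≤ 2 * 2 := hm
        _ = 4 := by norm_num
    have hbase : 0 ≤ u * Real.exp (-u) := by positivity
    have h6 := mul_le_mul_of_nonneg_right h1 hbase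
    nlinarith [Real.exp_pos (-u)]

private lemma aux3 (r : ℝ) (hr : 0 < r) :
    (Real.log r) ^ 2 ≤ 16 * r ^ ((-1 : ℝ) / 2) + 16 * r ^ ((1 : ℝ) / 2) := by
  have key : ∀ y : ℝ, 0 < y → Real.log y ≤ 4 * y ^ ((1:ℝ)/4) := by
    intro y hy
    have h1 : Real.log (y ^ ((1:ℝ)/4)) ≤ y ^ ((1:ℝ)/4) - 1 :=
      Real.log_le_sub_one_of_pos (Real.rpow_pos_of_pos hy _)
    rw [Real.log_rpow hy] at h1
    linarith
  have hq : ∀ y : ℝ, 0 < y → (y ^ ((1:ℝ)/4)) ^ 2 = y ^ ((1:ℝ)/2) := by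
    intro y hy
    rw [← Real.rpow_natCast (y ^ ((1:ℝ)/4)) 2, ← Real.rpow_mul hy.le]
    norm_num
  rcases le_or_gt 1 r with h | h
  · have h1 := key r hr
    have h2 : 0 ≤ Real.log r := Real.log_nonneg h
    have h3 : (Real.log r) ^ 2 ≤ (4 * r ^ ((1:ℝ)/4)) ^ 2 := by
      apply pow_le_pow_left₀ h2 h1
    have h4 : (4 * r ^ ((1:ℝ)/4)) ^ 2 = 16 * r ^ ((1:ℝ)/2) := by
      rw [mul_pow, hq r hr]; norm_num
    have h5 : 0 ≤ 16 * r ^ ((-1:ℝ)/2) := by positivity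
    linarith
  · have hinv : (0 : ℝ) < 1 / r := by positivity
    have h1 := key (1/r) hinv
    have h2 : Real.log (1/r) = -Real.log r := by
      rw [Real.log_div one_ne_zero hr.ne', Real.log_one]; ring
    rw [h2] at h1
    have h2' : 0 ≤ -Real.log r := by
      have := Real.log_nonpos hr.le h.le; linarith
    have h3 : (-Real.log r) ^ 2 ≤ (4 * (1/r) ^ ((1:ℝ)/4)) ^ 2 := pow_le_pow_left₀ h2' h1 2
    have h4 : (4 * (1/r) ^ ((1:ℝ)/4)) ^ 2 = 16 * r ^ ((-1:ℝ)/2) := by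
      rw [mul_pow, hq (1/r) hinv, one_div, Real.inv_rpow hr.le, ← Real.rpow_neg hr.le]
      norm_num
    have h5 : 0 ≤ 16 * r ^ ((1:ℝ)/2) := by positivity
    nlinarith [sq_abs (Real.log r)]

/-- Pointwise bound. -/
private lemma keybound (T : ℝ) (μ s : ℝ) (hμ : 0 < μ) (hs : 0 < s)
    (r : ℝ) (hr0 : 0 ≤ r) (hrT : r ≤ T) :
    (μ * r * (Real.log μ / s) * Real.exp (-μ * r)) ^ 2
      ≤ ((32 + 32 * T ^ ((1:ℝ)/2)) + 32 * r ^ ((-1:ℝ)/2)) / s ^ 2 := by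
  have hT0 : 0 ≤ T := le_trans hr0 hrT
  rcases eq_or_lt_of_le hr0 with h0 | hr
  · rw [← h0]
    have h1 : (0:ℝ) ≤ ((32 + 32 * T ^ ((1:ℝ)/2)) + 32 * (0:ℝ) ^ ((-1:ℝ)/2)) / s ^ 2 := by
      positivity
    simpa using h1
  · have hupos : 0 < μ * r := by positivity
    have hlogμ : Real.log μ = Real.log (μ * r) - Real.log r := by
      rw [Real.log_mul hμ.ne' hr.ne']; ring
    have hue : (μ * r) * Real.exp (-(μ * r)) ≤ 1 := aux1 (μ * r)
    have hue0 : 0 ≤ (μ * r) * Real.exp (-(μ * r)) := by positivity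
    have hF : |Real.log μ| * ((μ * r) * Real.exp (-(μ * r))) ≤ 4 + |Real.log r| := by
      have h1 : |Real.log μ| ≤ |Real.log (μ * r)| + |Real.log r| := by
        rw [hlogμ]; exact abs_sub _ _
      have h2 := aux2 (μ * r) hupos
      have h3 : |Real.log r| * ((μ * r) * Real.exp (-(μ * r))) ≤ |Real.log r| := by
        nlinarith [abs_nonneg (Real.log r)]
      nlinarith [abs_nonneg (Real.log μ), abs_nonneg (Real.log (μ * r))]
    have hs2 : (0:ℝ) < s ^ 2 := by positivity
    rw [le_div_iff₀ hs2]
    have hexpand : (μ * r * (Real.log μ / s) * Real.exp (-μ * r)) ^ 2 * s ^ 2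
        = (|Real.log μ| * ((μ * r) * Real.exp (-(μ * r)))) ^ 2 := by
      rw [neg_mul, show (|Real.log μ| * (μ * r * Real.exp (-(μ * r)))) ^ 2
          = (Real.log μ) ^ 2 * (μ * r * Real.exp (-(μ * r))) ^ 2 by rw [mul_pow, sq_abs]]
      field_simp
    have hlogr2 : (Real.log r) ^ 2 ≤ 16 * r ^ ((-1:ℝ)/2) + 16 * r ^ ((1:ℝ)/2) := aux3 r hr
    have hrhalf : r ^ ((1:ℝ)/2) ≤ T ^ ((1:ℝ)/2) :=
      Real.rpow_le_rpow hr0 hrT (by norm_num)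
    have hsq : (|Real.log μ| * ((μ * r) * Real.exp (-(μ * r)))) ^ 2
        ≤ (4 + |Real.log r|) ^ 2 := by
      apply pow_le_pow_left₀ (by positivity) hF
    calc (μ * r * (Real.log μ / s) * Real.exp (-μ * r)) ^ 2 * s ^ 2
        = (|Real.log μ| * ((μ * r) * Real.exp (-(μ * r)))) ^ 2 := hexpand
      _ ≤ (4 + |Real.log r|) ^ 2 := hsq
      _ ≤ 32 + 2 * (Real.log r) ^ 2 := by
          nlinarith [sq_nonneg (|Real.log r| - 4), sq_abs (Real.log r),
            abs_nonneg (Real.log r)]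
      _ ≤ (32 + 32 * T ^ ((1:ℝ)/2)) + 32 * r ^ ((-1:ℝ)/2) := by linarith

/-- Itô-isometry estimate for the first `s`-derivative of the stochastic convolution mode:
`∫₀ᵗ (λ^s (t-τ) ln(λ) e^{-λ^s (t-τ)})² dτ ≤ C/s²` uniformly in `λ > 0` and `t ∈ (0,T]`. -/
theorem stmt16 (T : ℝ) (hT : 0 < T) :
    ∃ C : ℝ, 0 < C ∧
      ∀ lam s : ℝ, 0 < lam → 0 < s → ∀ t ∈ Set.Ioc (0 : ℝ) T,
        (∫ τ in (0 : ℝ)..t,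
            (lam ^ s * (t - τ) * Real.log lam * Real.exp (-(lam ^ s) * (t - τ))) ^ 2)
          ≤ C / s ^ 2 := by
  refine ⟨(32 + 32 * T ^ ((1:ℝ)/2)) * T + 64 * T ^ ((1:ℝ)/2), by positivity, ?_⟩
  intro lam s hlam hs t ht
  obtain ⟨ht0, htT⟩ := ht
  have hμ : 0 < lam ^ s := Real.rpow_pos_of_pos hlam s
  have hloglam : Real.log lam = Real.log (lam ^ s) / s := by
    rw [Real.log_rpow hlam]
    field_simp
  set μ : ℝ := lam ^ s with hμdef
  set A : ℝ := 32 + 32 * T ^ ((1:ℝ)/2) with hA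
  have hA0 : 0 < A := by positivity
  set f : ℝ → ℝ := fun τ => (μ * (t - τ) * Real.log lam * Real.exp (-μ * (t - τ))) ^ 2 with hf
  set g : ℝ → ℝ := fun τ => (A + 32 * (t - τ) ^ ((-1:ℝ)/2)) / s ^ 2 with hg
  have hfc : Continuous f := by fun_prop
  have hfi : IntervalIntegrable f MeasureTheory.volume 0 t := hfc.intervalIntegrable _ _
  have hgi' : IntervalIntegrable (fun τ : ℝ => (t - τ) ^ ((-1:ℝ)/2))
      MeasureTheory.volume 0 t := by
    have h := (intervalIntegral.intervalIntegrable_rpow' (a := 0) (b := t) (r := (-1:ℝ)/2)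
      (by norm_num)).comp_sub_left t
    simpa using h.symm
  have hgeq : g = fun τ : ℝ => A / s ^ 2 + (32 / s ^ 2) * (t - τ) ^ ((-1:ℝ)/2) := by
    funext τ; rw [hg]; ring
  have hgi : IntervalIntegrable g MeasureTheory.volume 0 t := by
    rw [hgeq]
    exact (intervalIntegrable_const).add (hgi'.const_mul _)
  have hmono : ∀ τ ∈ Set.Icc (0:ℝ) t, f τ ≤ g τ := by
    intro τ hτ
    obtain ⟨hτ0, hτt⟩ := hτ
    have hr0 : 0 ≤ t - τ := by linarith
    have hrT : t - τ ≤ T := by linarith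
    rw [hf, hg, hloglam]
    exact keybound T μ s hμ hs (t - τ) hr0 hrT
  have hint : (∫ τ in (0:ℝ)..t, f τ) ≤ ∫ τ in (0:ℝ)..t, g τ :=
    intervalIntegral.integral_mono_on ht0.le hfi hgi hmono
  have hcomp : (∫ τ in (0:ℝ)..t, (t - τ) ^ ((-1:ℝ)/2)) = 2 * t ^ ((1:ℝ)/2) := by
    rw [intervalIntegral.integral_comp_sub_left (fun x : ℝ => x ^ ((-1:ℝ)/2)) t]
    simp only [sub_self, sub_zero]
    rw [integral_rpow (Or.inl (by norm_num))]
    rw [show ((-1:ℝ)/2 + 1) = 1/2 by norm_num,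
      Real.zero_rpow (by norm_num : (1:ℝ)/2 ≠ 0)]
    ring
  have hgval : (∫ τ in (0:ℝ)..t, g τ) = (A * t + 64 * t ^ ((1:ℝ)/2)) / s ^ 2 := by
    rw [hgeq, intervalIntegral.integral_add intervalIntegrable_const (hgi'.const_mul _),
      intervalIntegral.integral_const, intervalIntegral.integral_const_mul, hcomp]
    simp only [smul_eq_mul, sub_zero]
    field_simp
    ring
  have hth : t ^ ((1:ℝ)/2) ≤ T ^ ((1:ℝ)/2) := Real.rpow_le_rpow ht0.le htT (by norm_num)
  have hfinal : (A * t + 64 * t ^ ((1:ℝ)/2)) / s ^ 2 ≤ (A * T + 64 * T ^ ((1:ℝ)/2)) / s ^ 2 := by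
    gcongr
  calc (∫ τ in (0:ℝ)..t, f τ) ≤ ∫ τ in (0:ℝ)..t, g τ := hint
    _ = (A * t + 64 * t ^ ((1:ℝ)/2)) / s ^ 2 := hgval
    _ ≤ (A * T + 64 * T ^ ((1:ℝ)/2)) / s ^ 2 := hfinal
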